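/- Uniqueness of the Vandermonde generators: Let X ∈ ℂ^{I₁×I₂×I₃} admit two CPDs with factor matrix triples (B⁽¹⁾, B⁽²⁾, B⁽³⁾) and (C⁽¹⁾, C⁽²⁾, C⁽³⁾), each with Q columns, where B⁽³⁾ is Vandermonde with pairwise distinct generators z₁,…,z_Q and C⁽³⁾ is Vandermonde with pairwise distinct generators w₁,…,w_Q. Suppose there exist positive integers K₃, L₃ with K₃ + L₃ = I₃ + 1 such that rank(B⁽³⁾⁽ᴷ³⁻¹⁾ ⊙ B⁽²⁾) = Q and rank(B⁽³⁾⁽ᴸ³⁾ ⊙ B⁽¹⁾) = Q. Then {z₁,…,z_Q} = {w₁,…,w_Q} as sets; i.e., there is a permutation σ of {1,…,Q} with w_q = z_{σ(q)} for all q. -/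

import Mathlib

open Matrix

noncomputable section

/-- `X` admits a CPD with factor matrices `B1`, `B2`, `B3`. -/
def IsCPD {I₁ I₂ I₃ Q : ℕ} (X : Fin I₁ → Fin I₂ → Fin I₃ → ℂ)
    (B1 : Matrix (Fin I₁) (Fin Q) ℂ) (B2 : Matrix (Fin I₂) (Fin Q) ℂ)
    (B3 : Matrix (Fin I₃) (Fin Q) ℂ) : Prop :=
  ∀ i j k, X i j k = ∑ q, B1 i q * B2 j q * B3 k q

/-- `B` is a Vandermonde matrix with generators `z`: `B_{k,q} = z_q^{k-1}`
(with 1-based row index `k`, i.e. exponent `k` for the 0-based index). -/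
def IsVandermonde {K Q : ℕ} (B : Matrix (Fin K) (Fin Q) ℂ) (z : Fin Q → ℂ) : Prop :=
  ∀ k q, B k q = z q ^ (k : ℕ)

/-- The Khatri-Rao (columnwise Kronecker) product: the row indexed by `(i, j)`
corresponds to row `(i-1)J + j` in 1-based linear indexing. -/
def khatriRao {I J Q : ℕ} (A : Matrix (Fin I) (Fin Q) ℂ)
    (B : Matrix (Fin J) (Fin Q) ℂ) : Matrix (Fin I × Fin J) (Fin Q) ℂ :=
  Matrix.of fun p q => A p.1 q * B p.2 q

/-- The submatrix consisting of the first `m` rows of `A`. -/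
def firstRows {K Q : ℕ} (A : Matrix (Fin K) (Fin Q) ℂ) (m : ℕ) (h : m ≤ K) :
    Matrix (Fin m) (Fin Q) ℂ :=
  Matrix.of fun i q => A (Fin.castLE h i) q

lemma aux_inj {m : Type*} [Fintype m] {Q : ℕ} (A : Matrix m (Fin Q) ℂ) (h : A.rank = Q) :
    Function.Injective A.mulVec := by
  have h1 := LinearMap.finrank_range_add_finrank_ker A.mulVecLin
  rw [show Module.finrank ℂ (Fin Q → ℂ) = Q by simp] at h1
  have hk : Module.finrank ℂ (LinearMap.ker A.mulVecLin) = 0 := by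
    have hr : A.rank = Module.finrank ℂ (LinearMap.range A.mulVecLin) := rfl
    omega
  have hker : LinearMap.ker A.mulVecLin = ⊥ := Submodule.finrank_eq_zero.mp hk
  have hinj := LinearMap.ker_eq_bot.mp hker
  intro a b hab
  exact hinj (by simpa [Matrix.mulVecLin_apply] using hab)

lemma aux_rightInv {m : Type*} [Fintype m] [DecidableEq m] {Q : ℕ}
    (A : Matrix (Fin Q) m ℂ) (h : Function.Surjective A.mulVec) :
    ∃ R : Matrix m (Fin Q) ℂ, A * R = 1 := by
  have hsurj : Function.Surjective (Matrix.toLin' A) := by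
    exact h
  obtain ⟨g, hg⟩ := (Matrix.toLin' A).exists_rightInverse_of_surjective
    (LinearMap.range_eq_top.mpr hsurj)
  refine ⟨LinearMap.toMatrix' g, ?_⟩
  apply Matrix.toLin'.injective
  rw [Matrix.toLin'_mul, Matrix.toLin'_toMatrix', hg, Matrix.toLin'_one]

lemma aux_surj {m : Type*} [Fintype m] {Q : ℕ} (A : Matrix (Fin Q) m ℂ) (h : A.rank = Q) :
    Function.Surjective A.mulVec := by
  have htop : LinearMap.range A.mulVecLin = ⊤ := by
    apply Submodule.eq_top_of_finrank_eq
    rw [show Module.finrank ℂ (Fin Q → ℂ) = Q by simp]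
    exact h
  intro v
  obtain ⟨u, hu⟩ := LinearMap.range_eq_top.mp htop v
  exact ⟨u, by simpa [Matrix.mulVecLin_apply] using hu⟩

lemma aux_sq_inv {Q : ℕ} (N : Matrix (Fin Q) (Fin Q) ℂ) (h : Function.Injective N.mulVec) :
    ∃ M : Matrix (Fin Q) (Fin Q) ℂ, N * M = 1 := by
  have hinj : Function.Injective (Matrix.toLin' N) := by
    exact h
  have hsurj := (LinearMap.injective_iff_surjective).mp hinj
  obtain ⟨g, hg⟩ := (Matrix.toLin' N).exists_rightInverse_of_surjective
    (LinearMap.range_eq_top.mpr hsurj)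
  refine ⟨LinearMap.toMatrix' g, ?_⟩
  apply Matrix.toLin'.injective
  rw [Matrix.toLin'_mul, Matrix.toLin'_toMatrix', hg, Matrix.toLin'_one]

/-- Uniqueness of the Vandermonde generators: if `X` admits two CPDs whose
third factor matrices are Vandermonde with pairwise distinct generators, and
the first decomposition satisfies the rank conditions, then the two sets of
generators coincide up to a permutation. -/
theorem vandermonde_generator_uniqueness {I₁ I₂ I₃ Q : ℕ}
    (X : Fin I₁ → Fin I₂ → Fin I₃ → ℂ)
    (B1 : Matrix (Fin I₁) (Fin Q) ℂ) (B2 : Matrix (Fin I₂) (Fin Q) ℂ)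
    (B3 : Matrix (Fin I₃) (Fin Q) ℂ)
    (C1 : Matrix (Fin I₁) (Fin Q) ℂ) (C2 : Matrix (Fin I₂) (Fin Q) ℂ)
    (C3 : Matrix (Fin I₃) (Fin Q) ℂ)
    (hB : IsCPD X B1 B2 B3) (hC : IsCPD X C1 C2 C3)
    (z : Fin Q → ℂ) (hVz : IsVandermonde B3 z) (hz : Function.Injective z)
    (w : Fin Q → ℂ) (hVw : IsVandermonde C3 w) (hw : Function.Injective w)
    (K₃ L₃ : ℕ) (hK₃ : 1 ≤ K₃) (hL₃ : 1 ≤ L₃) (hsum : K₃ + L₃ = I₃ + 1)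
    (hrank1 : (khatriRao (firstRows B3 (K₃ - 1) (by omega)) B2).rank = Q)
    (hrank2 : (khatriRao (firstRows B3 L₃ (by omega)) B1).rank = Q) :
    ∃ σ : Equiv.Perm (Fin Q), ∀ q, w q = z (σ q) := by
  have hKI : K₃ ≤ I₃ := by omega
  have hK'I : K₃ - 1 ≤ I₃ := by omega
  have hLI : L₃ ≤ I₃ := by omega
  set E : Matrix (Fin K₃ × Fin I₂) (Fin Q) ℂ := khatriRao (firstRows B3 K₃ hKI) B2 with hEdef
  set F : Matrix (Fin L₃ × Fin I₁) (Fin Q) ℂ := khatriRao (firstRows B3 L₃ hLI) B1 with hFdef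
  set G : Matrix (Fin K₃ × Fin I₂) (Fin Q) ℂ := khatriRao (firstRows C3 K₃ hKI) C2 with hGdef
  set H : Matrix (Fin L₃ × Fin I₁) (Fin Q) ℂ := khatriRao (firstRows C3 L₃ hLI) C1 with hHdef
  set E' : Matrix (Fin (K₃ - 1) × Fin I₂) (Fin Q) ℂ :=
    khatriRao (firstRows B3 (K₃ - 1) hK'I) B2 with hE'def
  -- entry formulas
  have hEentry : ∀ (p : Fin K₃ × Fin I₂) q, E p q = z q ^ (p.1 : ℕ) * B2 p.2 q := by
    intro p q
    simp [hEdef, khatriRao, firstRows, hVz (Fin.castLE hKI p.1) q]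
  have hFentry : ∀ (p : Fin L₃ × Fin I₁) q, F p q = z q ^ (p.1 : ℕ) * B1 p.2 q := by
    intro p q
    simp [hFdef, khatriRao, firstRows, hVz (Fin.castLE hLI p.1) q]
  have hGentry : ∀ (p : Fin K₃ × Fin I₂) q, G p q = w q ^ (p.1 : ℕ) * C2 p.2 q := by
    intro p q
    simp [hGdef, khatriRao, firstRows, hVw (Fin.castLE hKI p.1) q]
  have hHentry : ∀ (p : Fin L₃ × Fin I₁) q, H p q = w q ^ (p.1 : ℕ) * C1 p.2 q := by
    intro p q
    simp [hHdef, khatriRao, firstRows, hVw (Fin.castLE hLI p.1) q]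
  have hE'entry : ∀ (p : Fin (K₃ - 1) × Fin I₂) q, E' p q = z q ^ (p.1 : ℕ) * B2 p.2 q := by
    intro p q
    simp [hE'def, khatriRao, firstRows, hVz (Fin.castLE hK'I p.1) q]
  -- the smoothing identity
  have key : ∀ (k : Fin K₃) (l : Fin L₃) (i : Fin I₁) (j : Fin I₂),
      ∑ q, B1 i q * B2 j q * z q ^ ((k : ℕ) + (l : ℕ)) =
      ∑ q, C1 i q * C2 j q * w q ^ ((k : ℕ) + (l : ℕ)) := by
    intro k l i j
    have hm : (k : ℕ) + (l : ℕ) < I₃ := by omega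
    calc ∑ q, B1 i q * B2 j q * z q ^ ((k : ℕ) + (l : ℕ))
        = ∑ q, B1 i q * B2 j q * B3 ⟨(k : ℕ) + (l : ℕ), hm⟩ q := by
          refine Finset.sum_congr rfl fun q _ => ?_
          rw [hVz ⟨(k : ℕ) + (l : ℕ), hm⟩ q]
      _ = X i j ⟨(k : ℕ) + (l : ℕ), hm⟩ := (hB i j _).symm
      _ = ∑ q, C1 i q * C2 j q * C3 ⟨(k : ℕ) + (l : ℕ), hm⟩ q := hC i j _
      _ = ∑ q, C1 i q * C2 j q * w q ^ ((k : ℕ) + (l : ℕ)) := by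
          refine Finset.sum_congr rfl fun q _ => ?_
          rw [hVw ⟨(k : ℕ) + (l : ℕ), hm⟩ q]
  have hEF : E * Fᵀ = G * Hᵀ := by
    ext p r
    rw [Matrix.mul_apply, Matrix.mul_apply]
    calc ∑ q, E p q * Fᵀ q r
        = ∑ q, B1 r.2 q * B2 p.2 q * z q ^ ((p.1 : ℕ) + (r.1 : ℕ)) := by
          refine Finset.sum_congr rfl fun q _ => ?_
          rw [Matrix.transpose_apply, hEentry, hFentry, pow_add]; ring
      _ = ∑ q, C1 r.2 q * C2 p.2 q * w q ^ ((p.1 : ℕ) + (r.1 : ℕ)) := key p.1 r.1 r.2 p.2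
      _ = ∑ q, G p q * Hᵀ q r := by
          refine Finset.sum_congr rfl fun q _ => ?_
          rw [Matrix.transpose_apply, hGentry, hHentry, pow_add]; ring
  -- rank consequences
  have hE'inj : Function.Injective E'.mulVec := aux_inj E' hrank1
  have hFinj : Function.Injective F.mulVec := aux_inj F hrank2
  have hFTsurj : Function.Surjective Fᵀ.mulVec := by
    apply aux_surj
    rw [Matrix.rank_transpose]
    exact hrank2
  obtain ⟨R, hR⟩ := aux_rightInv Fᵀ hFTsurj
  set N : Matrix (Fin Q) (Fin Q) ℂ := Hᵀ * R with hNdef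
  have hEGN : E = G * N := by
    calc E = E * (Fᵀ * R) := by rw [hR, Matrix.mul_one]
      _ = (E * Fᵀ) * R := by rw [Matrix.mul_assoc]
      _ = (G * Hᵀ) * R := by rw [hEF]
      _ = G * N := by rw [Matrix.mul_assoc]
  -- E has full column rank since E' consists of rows of E
  have hrowE : ∀ (c : Fin Q → ℂ) (p : Fin (K₃ - 1) × Fin I₂),
      E'.mulVec c p = E.mulVec c (⟨(p.1 : ℕ), by omega⟩, p.2) := by
    intro c p
    simp only [Matrix.mulVec, dotProduct]
    refine Finset.sum_congr rfl fun q _ => ?_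
    rw [hE'entry, hEentry]
  have hEinj : Function.Injective E.mulVec := by
    intro a b hab
    apply hE'inj
    funext p
    rw [hrowE, hrowE, hab]
  have hNinj : Function.Injective N.mulVec := by
    have hcomp : ∀ c, E.mulVec c = G.mulVec (N.mulVec c) := by
      intro c
      rw [hEGN, ← Matrix.mulVec_mulVec]
    intro a b hab
    apply hEinj
    rw [hcomp, hcomp, hab]
  obtain ⟨M, hNM⟩ := aux_sq_inv N hNinj
  have hGEM : G = E * M := by
    rw [hEGN, Matrix.mul_assoc, hNM, Matrix.mul_one]
  -- each column of M is nonzero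
  have hMcol : ∀ q : Fin Q, ∃ r, M r q ≠ 0 := by
    intro q
    by_contra hcon
    push_neg at hcon
    have hMv : M.mulVec (Pi.single q 1) = 0 := by
      funext r
      simp [Matrix.mulVec, dotProduct, Pi.single_apply, Finset.sum_ite_eq', hcon r]
    have hcontra : N.mulVec (M.mulVec (Pi.single q 1)) = Pi.single q 1 := by
      rw [Matrix.mulVec_mulVec, hNM, Matrix.one_mulVec]
    rw [hMv] at hcontra
    simp only [Matrix.mulVec_zero] at hcontra
    have := congrFun hcontra q
    simp [Pi.single_apply] at this
  -- nat-indexed entry lemmas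
  have hEnat : ∀ (n : ℕ) (hn : n < K₃) (j : Fin I₂) (q : Fin Q),
      E (⟨n, hn⟩, j) q = z q ^ n * B2 j q := fun n hn j q => hEentry (⟨n, hn⟩, j) q
  have hGnat : ∀ (n : ℕ) (hn : n < K₃) (j : Fin I₂) (q : Fin Q),
      G (⟨n, hn⟩, j) q = w q ^ n * C2 j q := fun n hn j q => hGentry (⟨n, hn⟩, j) q
  -- shift argument
  have hwz : ∀ q : Fin Q, ∃ r, z r = w q := by
    intro q
    have hGsum : ∀ a, G a q = ∑ r, E a r * M r q := by
      intro a
      rw [hGEM, Matrix.mul_apply]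
    have hshift : E'.mulVec (fun r => z r * M r q) = E'.mulVec (fun r => M r q * w q) := by
      funext p
      have hb1 : ((p.1 : ℕ)) < K₃ := by omega
      have hb2 : ((p.1 : ℕ)) + 1 < K₃ := by omega
      have h1 : E'.mulVec (fun r => z r * M r q) p = G (⟨(p.1 : ℕ) + 1, hb2⟩, p.2) q := by
        rw [hGsum]
        simp only [Matrix.mulVec, dotProduct]
        refine Finset.sum_congr rfl fun r _ => ?_
        rw [hE'entry, hEnat ((p.1 : ℕ) + 1) hb2 p.2 r, pow_succ]
        ring
      have h2 : E'.mulVec (fun r => M r q * w q) p = G (⟨(p.1 : ℕ), hb1⟩, p.2) q * w q := by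
        rw [hGsum, Finset.sum_mul]
        simp only [Matrix.mulVec, dotProduct]
        refine Finset.sum_congr rfl fun r _ => ?_
        rw [hE'entry, hEnat ((p.1 : ℕ)) hb1 p.2 r]
        ring
      rw [h1, h2, hGnat ((p.1 : ℕ) + 1) hb2 p.2 q, hGnat ((p.1 : ℕ)) hb1 p.2 q, pow_succ]
      ring
    have heq := hE'inj hshift
    obtain ⟨r, hr⟩ := hMcol q
    have h3 : z r * M r q = M r q * w q := congrFun heq r
    refine ⟨r, ?_⟩
    have h4 : z r * M r q = w q * M r q := by rw [h3]; ring
    exact mul_right_cancel₀ hr h4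
  choose f hf using hwz
  have hfinj : Function.Injective f := by
    intro a b hab
    apply hw
    rw [← hf a, ← hf b, hab]
  exact ⟨Equiv.ofBijective f ((Finite.injective_iff_bijective).mp hfinj),
    fun q => (hf q).symm⟩
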